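/- Let ν > 0, c ∈ (3/2, 5/2], f_0 > 0. Then there exists a fixed point of the viscous dyadic model: a sequence α with Σ_{j=0}^∞ 2^{2js} α_j² < ∞ for every s ≥ 0 (in particular α ∈ l²(ℕ)) satisfying ν 2^{2j} α_j − 2^{c(j−1)} α_{j−1}² + 2^{cj} α_j α_{j+1} = f_j for all j ≥ 0 (with α_{−1} = 0). -/

import Mathlib

open Filter MeasureTheory intervalIntegral
open Topology

/-- Right-hand side of the dyadic model ODE for the `j`-th component:
`d/dt a_j = f_j - ν 2^{2j} a_j + 2^{c(j-1)} a_{j-1}² - 2^{cj} a_j a_{j+1}`,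
with the conventions `a_{-1} = 0`, `f_0 = f₀`, `f_j = 0` for `j ≥ 1`. -/
noncomputable def dyadicRHS (ν c f₀ : ℝ) (a : ℕ → ℝ) (j : ℕ) : ℝ :=
  (if j = 0 then f₀ else 0) - ν * (2 : ℝ) ^ (2 * j) * a j
    + (if j = 0 then 0 else (2 : ℝ) ^ (c * ((j : ℝ) - 1)) * a (j - 1) ^ 2)
    - (2 : ℝ) ^ (c * (j : ℝ)) * a j * a (j + 1)

/-- A solution of the dyadic model on `[0, ∞)`: an `l²`-valued function whose
components are differentiable on `[0, ∞)` and satisfy the dyadic system. -/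
def IsSolution (ν c f₀ : ℝ) (a : ℝ → ℕ → ℝ) : Prop :=
  (∀ t : ℝ, 0 ≤ t → Summable (fun j : ℕ => a t j ^ 2)) ∧
  ∀ j : ℕ, ∀ t : ℝ, 0 ≤ t →
    HasDerivWithinAt (fun s : ℝ => a s j) (dyadicRHS ν c f₀ (a t) j) (Set.Ici 0) t

/-- A fixed point of the dyadic model: an `l²` sequence `α` with
`ν 2^{2j} α_j - 2^{c(j-1)} α_{j-1}² + 2^{cj} α_j α_{j+1} = f_j` for all `j ≥ 0`. -/
def IsFixedPoint (ν c f₀ : ℝ) (α : ℕ → ℝ) : Prop :=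
  (Summable fun j : ℕ => α j ^ 2) ∧
  ∀ j : ℕ, dyadicRHS ν c f₀ α j = 0

namespace DyadicAux

/-- One downward step: computes `a_j` from `(a_{j+1}, a_{j+2})` via the equation at index `j+1`. -/
noncomputable def Fstep (ν c : ℝ) (j : ℕ) (p : ℝ × ℝ) : ℝ × ℝ :=
  (Real.sqrt ((ν * (2:ℝ) ^ (2 * (j+1)) * p.1 + (2:ℝ) ^ (c * ((j:ℝ)+1)) * p.1 * p.2) /
    (2:ℝ) ^ (c * (j:ℝ))), p.1)

noncomputable def Fdown (ν c : ℝ) (N : ℕ) (t : ℝ) : ℕ → ℝ × ℝ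
  | 0 => (t, 0)
  | m+1 => Fstep ν c (N - (m+1)) (Fdown ν c N t m)

noncomputable def aGal (ν c : ℝ) (N : ℕ) (t : ℝ) (j : ℕ) : ℝ :=
  if j ≤ N then (Fdown ν c N t (N - j)).1 else 0

variable {ν c f₀ t : ℝ} {N : ℕ}

lemma Fdown_nonneg (ht : 0 ≤ t) : ∀ m, 0 ≤ (Fdown ν c N t m).1 ∧ 0 ≤ (Fdown ν c N t m).2
  | 0 => ⟨ht, le_refl 0⟩
  | (m+1) => ⟨Real.sqrt_nonneg _, (Fdown_nonneg ht m).1⟩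

lemma aGal_nonneg (ht : 0 ≤ t) (j : ℕ) : 0 ≤ aGal ν c N t j := by
  unfold aGal; split
  · exact (Fdown_nonneg ht _).1
  · exact le_refl 0

lemma aGal_of_gt (hj : N < j) : aGal ν c N t j = 0 := if_neg (by omega)

lemma Fdown_snd (hj : j ≤ N) : (Fdown ν c N t (N - j)).2 = aGal ν c N t (j+1) := by
  rcases eq_or_lt_of_le hj with rfl | hlt
  · rw [Nat.sub_self, aGal_of_gt (Nat.lt_succ_self j)]; rfl
  · have h1 : N - j = (N - (j+1)) + 1 := by omega
    rw [h1]
    show (Fstep ν c (N - ((N - (j+1)) + 1)) _).2 = _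
    rw [Fstep]
    rw [aGal, if_pos (by omega : j + 1 ≤ N)]

lemma aGal_eq_sqrt (hj : j < N) :
    aGal ν c N t j = Real.sqrt ((ν * (2:ℝ) ^ (2 * (j+1)) * aGal ν c N t (j+1)
      + (2:ℝ) ^ (c * ((j:ℝ)+1)) * aGal ν c N t (j+1) * aGal ν c N t (j+2)) /
      (2:ℝ) ^ (c * (j:ℝ))) := by
  have h1 : N - j = (N - (j+1)) + 1 := by omega
  rw [aGal, if_pos hj.le, h1]
  show (Fstep ν c (N - ((N - (j+1)) + 1)) _).1 = _
  have h2 : N - ((N - (j+1)) + 1) = j := by omega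
  rw [h2, Fstep]
  have h3 : (Fdown ν c N t (N - (j+1))).1 = aGal ν c N t (j+1) := by
    rw [aGal, if_pos (by omega : j + 1 ≤ N)]
  have h4 : (Fdown ν c N t (N - (j+1))).2 = aGal ν c N t (j+2) := Fdown_snd (by omega)
  rw [h3, h4]

lemma eq_Galerkin (hν : 0 < ν) (ht : 0 ≤ t) (hj : j < N) :
    dyadicRHS ν c f₀ (aGal ν c N t) (j+1) = 0 := by
  have hu : 0 ≤ aGal ν c N t (j+1) := aGal_nonneg ht _
  have hv : 0 ≤ aGal ν c N t (j+2) := aGal_nonneg ht _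
  have harg : 0 ≤ (ν * (2:ℝ) ^ (2 * (j+1)) * aGal ν c N t (j+1)
      + (2:ℝ) ^ (c * ((j:ℝ)+1)) * aGal ν c N t (j+1) * aGal ν c N t (j+2)) /
      (2:ℝ) ^ (c * (j:ℝ)) := by
    apply div_nonneg _ (Real.rpow_nonneg (by norm_num) _)
    have h1 : (0:ℝ) ≤ ν * (2:ℝ) ^ (2 * (j+1)) * aGal ν c N t (j+1) := by positivity
    have h2 : (0:ℝ) ≤ (2:ℝ) ^ (c * ((j:ℝ)+1)) * aGal ν c N t (j+1) * aGal ν c N t (j+2) := by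
      apply mul_nonneg (mul_nonneg (Real.rpow_nonneg (by norm_num) _) hu) hv
    linarith
  have hsq : (aGal ν c N t j) ^ 2 = (ν * (2:ℝ) ^ (2 * (j+1)) * aGal ν c N t (j+1)
      + (2:ℝ) ^ (c * ((j:ℝ)+1)) * aGal ν c N t (j+1) * aGal ν c N t (j+2)) /
      (2:ℝ) ^ (c * (j:ℝ)) := by
    rw [aGal_eq_sqrt hj, Real.sq_sqrt harg]
  have hpos : (0:ℝ) < (2:ℝ) ^ (c * (j:ℝ)) := Real.rpow_pos_of_pos (by norm_num) _
  rw [dyadicRHS]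
  simp only [Nat.succ_ne_zero, if_false, Nat.add_sub_cancel]
  have hcast : ((j+1 : ℕ) : ℝ) - 1 = (j : ℝ) := by push_cast; ring
  have hcast2 : ((j+1 : ℕ) : ℝ) = (j : ℝ) + 1 := by push_cast; ring
  rw [hcast, hcast2, hsq]
  field_simp
  ring


lemma continuous_Fdown (m : ℕ) : Continuous (fun t => Fdown ν c N t m) := by
  induction m with
  | zero => exact continuous_id.prodMk continuous_const
  | succ m ih =>
    have hstep : Continuous (Fstep ν c (N - (m+1))) := by
      unfold Fstep
      refine Continuous.prodMk (Real.continuous_sqrt.comp ?_) continuous_fst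
      fun_prop
    exact hstep.comp ih

lemma Fdown_zero (m : ℕ) : Fdown ν c N 0 m = (0, 0) := by
  induction m with
  | zero => rfl
  | succ m ih => simp [Fdown, Fstep, ih]

lemma sqrt_tendsto_atTop : Tendsto Real.sqrt atTop atTop := by
  refine (tendsto_rpow_atTop (y := (1:ℝ)/2) (by norm_num)).congr' ?_
  filter_upwards [eventually_ge_atTop (0:ℝ)] with x hx
  exact (Real.sqrt_eq_rpow x).symm

lemma Fdown_fst_tendsto (hν : 0 < ν) (m : ℕ) :
    Tendsto (fun t => (Fdown ν c N t m).1) atTop atTop := by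
  induction m with
  | zero => exact tendsto_id
  | succ m ih =>
    set j := N - (m+1) with hj
    have hC : (0:ℝ) < ν * (2:ℝ) ^ (2 * (j+1)) / (2:ℝ) ^ (c * (j:ℝ)) := by
      have := Real.rpow_pos_of_pos (show (0:ℝ) < 2 by norm_num) (c * (j:ℝ))
      positivity
    have h1 : Tendsto (fun t => ν * (2:ℝ) ^ (2 * (j+1)) / (2:ℝ) ^ (c * (j:ℝ))
        * (Fdown ν c N t m).1) atTop atTop := Tendsto.const_mul_atTop hC ih
    have h2 : Tendsto (fun t => Real.sqrt (ν * (2:ℝ) ^ (2 * (j+1)) / (2:ℝ) ^ (c * (j:ℝ))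
        * (Fdown ν c N t m).1)) atTop atTop := sqrt_tendsto_atTop.comp h1
    refine tendsto_atTop_mono' _ ?_ h2
    filter_upwards [eventually_ge_atTop (0:ℝ)] with t ht
    have hu : 0 ≤ (Fdown ν c N t m).1 := (Fdown_nonneg ht m).1
    have hv : 0 ≤ (Fdown ν c N t m).2 := (Fdown_nonneg ht m).2
    show Real.sqrt _ ≤ (Fstep ν c (N-(m+1)) (Fdown ν c N t m)).1
    rw [Fstep]
    apply Real.sqrt_le_sqrt
    have hpos : (0:ℝ) < (2:ℝ) ^ (c * (j:ℝ)) := Real.rpow_pos_of_pos (by norm_num) _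
    simp only [← hj]
    rw [div_mul_eq_mul_div]
    have hB : (0:ℝ) ≤ (2:ℝ) ^ (c * ((j:ℝ)+1)) * (Fdown ν c N t m).1 * (Fdown ν c N t m).2 :=
      mul_nonneg (mul_nonneg (Real.rpow_nonneg (by norm_num) _) hu) hv
    gcongr
    linarith

lemma continuous_aGal (j : ℕ) : Continuous (fun t => aGal ν c N t j) := by
  unfold aGal
  split
  · exact (continuous_fst).comp (continuous_Fdown _)
  · exact continuous_const

lemma exists_Galerkin (hν : 0 < ν) (hc : c ∈ Set.Ioc (3 / 2 : ℝ) (5 / 2)) (hf : 0 < f₀) (N : ℕ) :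
    ∃ a : ℕ → ℝ, (∀ j, 0 ≤ a j) ∧ (∀ j, j ≤ N → dyadicRHS ν c f₀ a j = 0) ∧
      (∀ j, N < j → a j = 0) := by
  set ψ : ℝ → ℝ := fun t => ν * (2:ℝ) ^ (2 * 0) * aGal ν c N t 0
    + (2:ℝ) ^ (c * ((0:ℕ):ℝ)) * aGal ν c N t 0 * aGal ν c N t 1 with hψ
  have hψcont : Continuous ψ := by
    apply Continuous.add
    · exact (continuous_const.mul (continuous_aGal 0))
    · exact (continuous_const.mul (continuous_aGal 0)).mul (continuous_aGal 1)
  have hψ0 : ψ 0 = 0 := by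
    have h0 : aGal ν c N 0 0 = 0 := by
      unfold aGal; split
      · rw [Fdown_zero]
      · rfl
    simp [hψ, h0]
  -- find T with ψ T ≥ f₀
  have ha0top : Tendsto (fun t => aGal ν c N t 0) atTop atTop := by
    have : (fun t => aGal ν c N t 0) = fun t => (Fdown ν c N t (N - 0)).1 := by
      funext t; rw [aGal, if_pos (Nat.zero_le N)]
    rw [this]
    exact Fdown_fst_tendsto hν _
  have hψtop : ∀ᶠ t in atTop, f₀ ≤ ψ t := by
    have h1 : ∀ᶠ t in atTop, f₀ / ν ≤ aGal ν c N t 0 := ha0top.eventually_ge_atTop _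
    filter_upwards [h1, eventually_ge_atTop (0:ℝ)] with t h2 ht
    have h3 : 0 ≤ (2:ℝ) ^ (c * ((0:ℕ):ℝ)) * aGal ν c N t 0 * aGal ν c N t 1 :=
      mul_nonneg (mul_nonneg (Real.rpow_nonneg (by norm_num) _) (aGal_nonneg ht 0))
        (aGal_nonneg ht 1)
    have h4 : ν * (f₀ / ν) ≤ ν * aGal ν c N t 0 := by
      exact mul_le_mul_of_nonneg_left h2 hν.le
    rw [mul_div_cancel₀ _ hν.ne'] at h4
    simp only [hψ, pow_zero, mul_one]
    calc f₀ ≤ ν * aGal ν c N t 0 := h4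
    _ ≤ ν * 1 * aGal ν c N t 0 + (2:ℝ) ^ (c * ((0:ℕ):ℝ)) * aGal ν c N t 0 * aGal ν c N t 1 := by
        rw [mul_one]; linarith
    _ = _ := by norm_num
  obtain ⟨T, hT1, hT0⟩ := (hψtop.and (eventually_ge_atTop (0:ℝ))).exists
  have hIVT := intermediate_value_Icc hT0 hψcont.continuousOn
  have hmem : f₀ ∈ Set.Icc (ψ 0) (ψ T) := by rw [hψ0]; exact ⟨hf.le, hT1⟩
  obtain ⟨t₀, ht₀mem, ht₀⟩ := hIVT hmem
  have ht₀0 : 0 ≤ t₀ := ht₀mem.1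
  refine ⟨aGal ν c N t₀, fun j => aGal_nonneg ht₀0 j, ?_, fun j hj => aGal_of_gt hj⟩
  intro j hjN
  match j with
  | 0 =>
    have h5 : ν * (2:ℝ) ^ (2 * 0) * aGal ν c N t₀ 0
        + (2:ℝ) ^ (c * ((0:ℕ):ℝ)) * aGal ν c N t₀ 0 * aGal ν c N t₀ 1 = f₀ := ht₀
    rw [dyadicRHS]
    simp only [if_pos rfl, if_true, ite_true, Nat.cast_zero, mul_zero, Real.rpow_zero, pow_zero, mul_one,
      one_mul, Nat.cast_ofNat, zero_add] at h5 ⊢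
    linarith
  | (j+1) => exact eq_Galerkin hν ht₀0 (by omega)

end DyadicAux


namespace DyadicAux
variable {ν c f₀ : ℝ} {N j : ℕ}

lemma Galerkin_bound (hν : 0 < ν) (hf : 0 < f₀) {a : ℕ → ℝ} {N : ℕ}
    (h0 : ∀ j, 0 ≤ a j) (heq : ∀ j, j ≤ N → dyadicRHS ν c f₀ a j = 0)
    (hz : ∀ j, N < j → a j = 0) :
    ∀ j, a j ≤ (f₀ / ν) / 2 ^ j := by
  have hK : 0 < f₀ / ν := div_pos hf hν
  -- a 0 ≤ f₀/ν
  have h00 : dyadicRHS ν c f₀ a 0 = 0 := heq 0 (Nat.zero_le N)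
  rw [dyadicRHS] at h00
  simp only [if_pos rfl, if_true, ite_true, Nat.cast_zero, mul_zero, Real.rpow_zero, pow_zero,
    mul_one, one_mul, zero_add] at h00
  have ha01 : 0 ≤ a 0 * a 1 := mul_nonneg (h0 0) (h0 1)
  have ha0 : ν * a 0 ≤ f₀ := by
    have : 2 ^ (2 * 0) = (1:ℝ) := by norm_num
    nlinarith [h00]
  -- energy identity
  set H : ℕ → ℝ := fun j => if j = 0 then 0 else (2:ℝ) ^ (c * ((j:ℝ) - 1)) * a (j-1) ^ 2 * a j
    with hH
  have hterm : ∀ j ∈ Finset.range (N+1),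
      ν * (2:ℝ) ^ (2 * j) * (a j) ^ 2 = (if j = 0 then f₀ * a 0 else 0) + (H j - H (j+1)) := by
    intro j hj
    rw [Finset.mem_range] at hj
    have hEq := heq j (by omega)
    rw [dyadicRHS] at hEq
    match j with
    | 0 =>
      simp only [hH, if_pos rfl, if_true, ite_true, Nat.cast_zero, mul_zero, Real.rpow_zero,
        pow_zero, mul_one, one_mul, zero_add, Nat.one_ne_zero, if_false,
        Nat.cast_one, Nat.add_sub_cancel] at hEq ⊢
      norm_num
      linear_combination (-(a 0)) * hEq
    | (k+1) =>
      simp only [Nat.succ_ne_zero, if_false] at hEq ⊢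
      simp only [hH, Nat.succ_ne_zero, if_false, Nat.add_sub_cancel]
      have hc1 : ((k+1+1:ℕ):ℝ) - 1 = ((k+1:ℕ):ℝ) := by push_cast; ring
      rw [hc1]
      simp only [Nat.add_sub_cancel] at hEq
      linear_combination (-(a (k+1))) * hEq
  have hsum : ∑ j ∈ Finset.range (N+1), ν * (2:ℝ) ^ (2 * j) * (a j) ^ 2 = f₀ * a 0 := by
    rw [Finset.sum_congr rfl hterm, Finset.sum_add_distrib, Finset.sum_range_sub']
    have h1 : ∑ j ∈ Finset.range (N+1), (if j = 0 then f₀ * a 0 else 0) = f₀ * a 0 := by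
      rw [Finset.sum_ite_eq' (Finset.range (N+1)) 0 (fun _ => f₀ * a 0)]
      simp
    have h2 : H (N+1) = 0 := by
      simp only [hH, Nat.succ_ne_zero, if_false, Nat.add_sub_cancel]
      rw [hz (N+1) (Nat.lt_succ_self N)]
      ring
    rw [h1, h2]
    simp [hH]
  intro j
  rcases le_or_gt j N with hjN | hjN
  · have hsingle : ν * (2:ℝ) ^ (2 * j) * (a j) ^ 2 ≤ f₀ * a 0 := by
      rw [← hsum]
      apply Finset.single_le_sum (f := fun j => ν * (2:ℝ) ^ (2 * j) * (a j) ^ 2)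
      · intro i _
        positivity
      · rw [Finset.mem_range]; omega
    have hsq : (a j) ^ 2 ≤ ((f₀ / ν) / 2 ^ j) ^ 2 := by
      have hp : (0:ℝ) < (2:ℝ) ^ (2 * j) := by positivity
      have h2 : (2:ℝ) ^ (2 * j) = ((2:ℝ) ^ j) ^ 2 := by rw [← pow_mul, mul_comm]
      have hfa0 : f₀ * a 0 ≤ f₀ * (f₀ / ν) := by
        apply mul_le_mul_of_nonneg_left _ hf.le
        rw [le_div_iff₀ hν]; linarith
      rw [div_pow, div_pow, ← h2]
      rw [le_div_iff₀ hp]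
      calc (a j) ^ 2 * 2 ^ (2 * j) = (ν * (2:ℝ) ^ (2*j) * (a j)^2) / ν := by
            field_simp
      _ ≤ (f₀ * (f₀ / ν)) / ν := by
            gcongr ?_ / ν
            linarith
      _ = f₀ ^ 2 / ν ^ 2 := by field_simp
    have h2p : (0:ℝ) < (f₀ / ν) / 2 ^ j := by positivity
    nlinarith [h0 j, hsq, h2p]
  · rw [hz j hjN]; positivity

end DyadicAux


theorem stmt_19 (ν c f₀ : ℝ) (hν : 0 < ν)
    (hc : c ∈ Set.Ioc (3 / 2 : ℝ) (5 / 2)) (hf : 0 < f₀) :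
    ∃ α : ℕ → ℝ, IsFixedPoint ν c f₀ α ∧
      ∀ s : ℝ, 0 ≤ s → Summable (fun j : ℕ => (2 : ℝ) ^ (2 * (j : ℝ) * s) * α j ^ 2) := by
  obtain ⟨hc1, hc2⟩ := hc
  set K : ℝ := f₀ / ν with hKdef
  have hK : 0 < K := div_pos hf hν
  have hGal : ∀ N : ℕ, ∃ a : ℕ → ℝ, (∀ j, 0 ≤ a j) ∧ (∀ j, j ≤ N → dyadicRHS ν c f₀ a j = 0) ∧
      (∀ j, a j ≤ K / 2 ^ j) := by
    intro N
    obtain ⟨a, h0, heq, hz⟩ := DyadicAux.exists_Galerkin hν ⟨hc1, hc2⟩ hf N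
    exact ⟨a, h0, heq, DyadicAux.Galerkin_bound hν hf h0 heq hz⟩
  choose A hA0 hAeq hAle using hGal
  have hScompact : IsCompact (Set.pi Set.univ fun j : ℕ => Set.Icc (0:ℝ) (K / 2 ^ j)) :=
    isCompact_univ_pi (fun j => isCompact_Icc)
  have hmem : ∀ N, A N ∈ Set.pi Set.univ fun j : ℕ => Set.Icc (0:ℝ) (K / 2 ^ j) :=
    fun N j _ => ⟨hA0 N j, hAle N j⟩
  obtain ⟨α, hαS, φ, hφmono, hconv⟩ := hScompact.tendsto_subseq hmem
  have hconv' : ∀ j, Tendsto (fun n => A (φ n) j) atTop (𝓝 (α j)) :=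
    fun j => (tendsto_pi_nhds.1 hconv) j
  have hα0 : ∀ j, 0 ≤ α j := fun j => (hαS j (Set.mem_univ j)).1
  have hαle : ∀ j, α j ≤ K / 2 ^ j := fun j => (hαS j (Set.mem_univ j)).2
  have hαeq : ∀ j, dyadicRHS ν c f₀ α j = 0 := by
    intro j
    have hcont : Continuous (fun x : ℕ → ℝ => dyadicRHS ν c f₀ x j) := by
      unfold dyadicRHS
      rcases eq_or_ne j 0 with rfl | hj
      · simp only [reduceIte]
        fun_prop
      · simp only [if_neg hj]
        fun_prop
    have h1 : Tendsto (fun n => dyadicRHS ν c f₀ (A (φ n)) j) atTop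
        (𝓝 (dyadicRHS ν c f₀ α j)) := (hcont.tendsto α).comp hconv
    have h2 : (fun n => dyadicRHS ν c f₀ (A (φ n)) j) =ᶠ[atTop] (fun _ => (0:ℝ)) := by
      filter_upwards [eventually_ge_atTop j] with n hn
      exact hAeq (φ n) j (le_trans hn hφmono.le_apply)
    exact tendsto_nhds_unique (h1.congr' h2) tendsto_const_nhds
  -- one-step decay estimate
  have hstep : ∀ j : ℕ, α (j+1) ≤ (K / ν) * (2:ℝ) ^ (-((j:ℝ)+1)/2) * α j := by
    intro j
    have heq := hαeq (j+1)
    rw [dyadicRHS] at heq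
    simp only [Nat.succ_ne_zero, if_false, Nat.add_sub_cancel] at heq
    have hc1' : ((j+1:ℕ):ℝ) - 1 = (j:ℝ) := by push_cast; ring
    rw [hc1'] at heq
    have hflux : 0 ≤ (2:ℝ) ^ (c * ((j+1:ℕ):ℝ)) * α (j+1) * α (j+2) :=
      mul_nonneg (mul_nonneg (Real.rpow_nonneg (by norm_num) _) (hα0 _)) (hα0 _)
    have h1 : ν * 2 ^ (2*(j+1)) * α (j+1) ≤ (2:ℝ) ^ (c*(j:ℝ)) * α j ^ 2 := by linarith
    have hp : (0:ℝ) < 2 ^ j := by positivity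
    have hZ : (2:ℝ) ^ j * α j ≤ K := by
      have := hαle j
      rw [le_div_iff₀ hp] at this
      linarith
    have hpow : (2:ℝ) ^ (c*(j:ℝ)) ≤ (2:ℝ) ^ j * (2:ℝ) ^ (2*(j+1)) * (2:ℝ) ^ (-((j:ℝ)+1)/2) := by
      rw [show ((2:ℝ) ^ j : ℝ) = (2:ℝ) ^ ((j:ℕ):ℝ) from (Real.rpow_natCast 2 j).symm,
        show ((2:ℝ) ^ (2*(j+1)) : ℝ) = (2:ℝ) ^ ((2*(j+1):ℕ):ℝ) from (Real.rpow_natCast 2 _).symm,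
        ← Real.rpow_add two_pos, ← Real.rpow_add two_pos]
      apply Real.rpow_le_rpow_of_exponent_le one_le_two
      push_cast
      nlinarith [mul_le_mul_of_nonneg_right hc2 (Nat.cast_nonneg j : (0:ℝ) ≤ (j:ℝ))]
    have hW : (0:ℝ) < (2:ℝ) ^ (-((j:ℝ)+1)/2) := Real.rpow_pos_of_pos two_pos _
    have chain : ν * 2 ^ (2*(j+1)) * α (j+1)
        ≤ (2:ℝ) ^ (2*(j+1)) * (2:ℝ) ^ (-((j:ℝ)+1)/2) * K * α j := by
      calc ν * 2 ^ (2*(j+1)) * α (j+1) ≤ (2:ℝ) ^ (c*(j:ℝ)) * α j ^ 2 := h1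
      _ ≤ ((2:ℝ) ^ j * (2:ℝ) ^ (2*(j+1)) * (2:ℝ) ^ (-((j:ℝ)+1)/2)) * α j ^ 2 :=
          mul_le_mul_of_nonneg_right hpow (sq_nonneg _)
      _ = ((2:ℝ) ^ (2*(j+1)) * (2:ℝ) ^ (-((j:ℝ)+1)/2)) * (((2:ℝ) ^ j * α j) * α j) := by ring
      _ ≤ ((2:ℝ) ^ (2*(j+1)) * (2:ℝ) ^ (-((j:ℝ)+1)/2)) * (K * α j) := by
          apply mul_le_mul_of_nonneg_left _ (by positivity)
          exact mul_le_mul_of_nonneg_right hZ (hα0 j)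
      _ = (2:ℝ) ^ (2*(j+1)) * (2:ℝ) ^ (-((j:ℝ)+1)/2) * K * α j := by ring
    have hνP : (0:ℝ) < ν * 2 ^ (2*(j+1)) := by positivity
    have final : (ν * 2 ^ (2*(j+1))) * α (j+1)
        ≤ (ν * 2 ^ (2*(j+1))) * ((K/ν) * (2:ℝ) ^ (-((j:ℝ)+1)/2) * α j) := by
      have hrw : (ν * 2 ^ (2*(j+1))) * ((K/ν) * (2:ℝ) ^ (-((j:ℝ)+1)/2) * α j)
          = (2:ℝ) ^ (2*(j+1)) * (2:ℝ) ^ (-((j:ℝ)+1)/2) * K * α j := by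
        field_simp
      rw [hrw]
      linarith [chain]
    exact le_of_mul_le_mul_left final hνP
  set D : ℝ := K / ν with hDdef
  have hD : 0 < D := div_pos hK hν
  have hquad : ∀ j : ℕ, α j ≤ K * D ^ j * (2:ℝ) ^ (-((j:ℝ)*((j:ℝ)+1))/4) := by
    intro j
    induction j with
    | zero =>
      have := hαle 0
      norm_num at this ⊢
      exact this
    | succ j ih =>
      calc α (j+1) ≤ D * (2:ℝ) ^ (-((j:ℝ)+1)/2) * α j := hstep j
      _ ≤ D * (2:ℝ) ^ (-((j:ℝ)+1)/2) * (K * D ^ j * (2:ℝ) ^ (-((j:ℝ)*((j:ℝ)+1))/4)) := by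
          apply mul_le_mul_of_nonneg_left ih
          positivity
      _ = K * D ^ (j+1) * ((2:ℝ) ^ (-((j:ℝ)+1)/2) * (2:ℝ) ^ (-((j:ℝ)*((j:ℝ)+1))/4)) := by ring
      _ = K * D ^ (j+1) * (2:ℝ) ^ (-(((j+1:ℕ):ℝ)*(((j+1:ℕ):ℝ)+1))/4) := by
          rw [← Real.rpow_add two_pos]
          congr 1
          push_cast
          ring
  have hsummain : ∀ s : ℝ, Summable (fun j : ℕ => (2:ℝ) ^ (2*(j:ℝ)*s) * α j ^ 2) := by
    intro s
    set g : ℕ → ℝ := fun j => K^2 * D^(2*j) * (2:ℝ) ^ (2*(j:ℝ)*s - (j:ℝ)*((j:ℝ)+1)/2) with hgdef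
    have hgpos : ∀ j, 0 < g j := fun j =>
      mul_pos (mul_pos (pow_pos hK 2) (pow_pos hD _)) (Real.rpow_pos_of_pos two_pos _)
    have hle : ∀ j : ℕ, (2:ℝ) ^ (2*(j:ℝ)*s) * α j ^ 2 ≤ g j := by
      intro j
      have h1 : α j ^ 2 ≤ (K * D ^ j * (2:ℝ) ^ (-((j:ℝ)*((j:ℝ)+1))/4)) ^ 2 :=
        pow_le_pow_left₀ (hα0 j) (hquad j) 2
      have h2 : (K * D ^ j * (2:ℝ) ^ (-((j:ℝ)*((j:ℝ)+1))/4)) ^ 2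
          = K^2 * D^(2*j) * (2:ℝ) ^ (-((j:ℝ)*((j:ℝ)+1))/2) := by
        rw [mul_pow, mul_pow, ← pow_mul, sq ((2:ℝ) ^ (-((j:ℝ)*((j:ℝ)+1))/4)),
          ← Real.rpow_add two_pos]
        rw [show j * 2 = 2 * j by ring]
        congr 1
        ring
      have h3 : (2:ℝ) ^ (2*(j:ℝ)*s) * ((2:ℝ) ^ (-((j:ℝ)*((j:ℝ)+1))/2))
          = (2:ℝ) ^ (2*(j:ℝ)*s - (j:ℝ)*((j:ℝ)+1)/2) := by
        rw [← Real.rpow_add two_pos]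
        congr 1
        ring
      calc (2:ℝ) ^ (2*(j:ℝ)*s) * α j ^ 2
          ≤ (2:ℝ) ^ (2*(j:ℝ)*s) * (K^2 * D^(2*j) * (2:ℝ) ^ (-((j:ℝ)*((j:ℝ)+1))/2)) := by
            rw [← h2]
            exact mul_le_mul_of_nonneg_left h1 (Real.rpow_nonneg (by norm_num) _)
      _ = K^2 * D^(2*j) * ((2:ℝ) ^ (2*(j:ℝ)*s) * (2:ℝ) ^ (-((j:ℝ)*((j:ℝ)+1))/2)) := by ring
      _ = g j := by rw [h3]
    have hrat : ∀ j : ℕ, g (j+1) = g j * (D^2 * (2:ℝ) ^ (2*s - ((j:ℝ)+1))) := by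
      intro j
      have e1 : (2:ℝ) ^ (2*(j:ℝ)*s - (j:ℝ)*((j:ℝ)+1)/2) * (2:ℝ) ^ (2*s - ((j:ℝ)+1))
          = (2:ℝ) ^ (2*((j+1:ℕ):ℝ)*s - ((j+1:ℕ):ℝ)*(((j+1:ℕ):ℝ)+1)/2) := by
        rw [← Real.rpow_add two_pos]
        congr 1
        push_cast
        ring
      have e2 : D^(2*(j+1)) = D^(2*j) * D^2 := by
        ring
      show K^2 * D^(2*(j+1)) * (2:ℝ) ^ (2*((j+1:ℕ):ℝ)*s - ((j+1:ℕ):ℝ)*(((j+1:ℕ):ℝ)+1)/2) = _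
      rw [e2, ← e1]
      ring
    have ht0 : Tendsto (fun j : ℕ => D^2 * (2:ℝ) ^ (2*s - ((j:ℝ)+1))) atTop (𝓝 0) := by
      have hform : ∀ j : ℕ, D^2 * (2:ℝ) ^ (2*s - ((j:ℝ)+1))
          = (D^2 * (2:ℝ) ^ (2*s)) * ((1:ℝ)/2)^(j+1) := by
        intro j
        rw [Real.rpow_sub two_pos,
          show ((j:ℝ)+1) = ((j+1:ℕ):ℝ) by push_cast; ring, Real.rpow_natCast]
        field_simp
        rw [← mul_pow]; norm_num
      have hgeo : Tendsto (fun j : ℕ => ((1:ℝ)/2)^(j+1)) atTop (𝓝 0) := by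
        have := tendsto_pow_atTop_nhds_zero_of_lt_one (by norm_num : (0:ℝ) ≤ 1/2)
          (by norm_num : (1:ℝ)/2 < 1)
        exact this.comp (tendsto_add_atTop_nat 1)
      have := hgeo.const_mul (D^2 * (2:ℝ) ^ (2*s))
      rw [mul_zero] at this
      refine this.congr fun j => (hform j).symm
    have hev : ∀ᶠ j in atTop, ‖g (j+1)‖ ≤ (1/2 : ℝ) * ‖g j‖ := by
      have hsmall : ∀ᶠ j : ℕ in atTop, D^2 * (2:ℝ) ^ (2*s - ((j:ℝ)+1)) ≤ 1/2 :=
        ht0.eventually (eventually_le_nhds (by norm_num : (0:ℝ) < 1/2))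
      filter_upwards [hsmall] with j hj
      rw [Real.norm_eq_abs, Real.norm_eq_abs, abs_of_pos (hgpos (j+1)), abs_of_pos (hgpos j),
        hrat j]
      calc g j * (D^2 * (2:ℝ) ^ (2*s - ((j:ℝ)+1))) ≤ g j * (1/2) :=
        mul_le_mul_of_nonneg_left hj (hgpos j).le
      _ = 1/2 * g j := by ring
    have hg : Summable g := summable_of_ratio_norm_eventually_le (by norm_num) hev
    exact Summable.of_nonneg_of_le (fun j => by positivity) hle hg
  refine ⟨α, ⟨?_, hαeq⟩, fun s _ => hsummain s⟩
  have := hsummain 0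
  refine this.congr fun j => ?_
  rw [mul_zero, Real.rpow_zero, one_mul]
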